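/- Let Ω = {ω₁,…,ω_n} with n ≥ 3, and for 1 ≤ i ≤ n−1 let H_i = {{ω_i}, Ω∖{ω_i}} (the minimal dominating sets of the star with center ω_i and all other vertices as leaves). Then the family of inclusion-minimal sets of the form A₁ ∪ ⋯ ∪ A_{n−1} with A_i ∈ H_i equals U_{n−1,Ω}, the family of all (n−1)-element subsets of Ω. -/

import Mathlib

/-- Let `Ω = {ω₁,…,ω_n}`, `n ≥ 3`, and for `1 ≤ i ≤ n−1` let
`H i = {{ω_i}, Ω∖{ω_i}}`. The inclusion-minimal sets of the form `A₁ ∪ ⋯ ∪ A_{n−1}` with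
`A_i ∈ H i` are exactly the `(n−1)`-element subsets of `Ω`. -/
theorem sqcap_stars_eq_uniform {V : Type*} [Fintype V] (n : ℕ) (hn : 3 ≤ n)
    (hcard : Fintype.card V = n) (w : Fin n → V) (hw : Function.Bijective w)
    (H : Fin (n - 1) → Set (Set V))
    (hH : ∀ i : Fin (n - 1), H i =
        {({w (Fin.castLE (Nat.sub_le n 1) i)} : Set V),
          (Set.univ \ {w (Fin.castLE (Nat.sub_le n 1) i)})})
    (U : Set (Set V))
    (hU : U = {s : Set V | ∃ A : Fin (n - 1) → Set V,
        (∀ i, A i ∈ H i) ∧ s = ⋃ i, A i}) :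
    {s ∈ U | ∀ t ∈ U, t ⊆ s → t = s} = {A : Set V | A.ncard = n - 1} := by
  have hn1 : n - 1 < n := by omega
  set c : Fin (n - 1) → V := fun i => w (Fin.castLE (Nat.sub_le n 1) i) with hc
  have hcinj : Function.Injective c := by
    intro i j h
    have h2 := hw.1 h
    exact Fin.castLE_injective _ h2
  set last : V := w ⟨n - 1, hn1⟩ with hlast
  have hclast : ∀ i, c i ≠ last := by
    intro i h
    have h2 : (Fin.castLE (Nat.sub_le n 1) i : Fin n) = ⟨n - 1, hn1⟩ := hw.1 h
    have h3 : (i : ℕ) = n - 1 := congrArg Fin.val h2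
    have := i.isLt
    omega
  have hrange : ∀ x : V, x ≠ last → ∃ i, c i = x := by
    intro x hx
    obtain ⟨k, rfl⟩ := hw.2 x
    have hk : (k : ℕ) < n - 1 := by
      rcases Nat.lt_or_ge (k : ℕ) (n - 1) with h | h
      · exact h
      · exact absurd (congrArg w (Fin.ext (show (k : ℕ) = n - 1 by omega))) hx
    exact ⟨⟨k, hk⟩, congrArg w (Fin.ext rfl)⟩
  -- characterize U
  have hUeq : U = {s : Set V | ∃ v : V, s = Set.univ \ {v}} ∪ {Set.univ} := by
    rw [hU]
    ext s
    simp only [Set.mem_setOf_eq, Set.mem_union, Set.mem_singleton_iff]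
    constructor
    · rintro ⟨A, hA, rfl⟩
      by_cases hall : ∀ i, A i = {c i}
      · left
        refine ⟨last, ?_⟩
        ext x
        simp only [Set.mem_iUnion, Set.mem_diff, Set.mem_univ, true_and,
          Set.mem_singleton_iff]
        constructor
        · rintro ⟨i, hi⟩
          rw [hall i] at hi
          rw [Set.mem_singleton_iff] at hi
          subst hi
          exact hclast i
        · intro hx
          obtain ⟨i, rfl⟩ := hrange x hx
          exact ⟨i, by rw [hall i]; exact rfl⟩
      · push_neg at hall
        obtain ⟨i, hi⟩ := hall
        have hAi : A i = Set.univ \ {c i} := by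
          have h := hA i; rw [hH i] at h
          rcases h with h | h
          · exact absurd h hi
          · exact h
        by_cases hall2 : ∀ j, j ≠ i → A j = {c j}
        · left
          refine ⟨c i, ?_⟩
          ext x
          simp only [Set.mem_iUnion, Set.mem_diff, Set.mem_univ, true_and,
            Set.mem_singleton_iff]
          constructor
          · rintro ⟨j, hj⟩
            by_cases hji : j = i
            · subst hji; rw [hAi] at hj; exact hj.2
            · rw [hall2 j hji] at hj
              rw [Set.mem_singleton_iff] at hj
              subst hj
              exact fun h => hji (hcinj h)
          · intro hx
            exact ⟨i, by rw [hAi]; exact ⟨trivial, hx⟩⟩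
        · right
          push_neg at hall2
          obtain ⟨j, hji, hj⟩ := hall2
          have hAj : A j = Set.univ \ {c j} := by
            have h := hA j; rw [hH j] at h
            rcases h with h | h
            · exact absurd h hj
            · exact h
          apply Set.eq_univ_of_forall
          intro x
          simp only [Set.mem_iUnion]
          by_cases hx : x = c i
          · refine ⟨j, ?_⟩
            rw [hAj]
            refine ⟨trivial, fun h => hji ?_⟩
            rw [Set.mem_singleton_iff] at h
            exact hcinj (h.symm.trans hx)
          · exact ⟨i, by rw [hAi]; exact ⟨trivial, hx⟩⟩
    · rintro (⟨v, rfl⟩ | rfl)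
      · by_cases hv : v = last
        · subst hv
          refine ⟨fun i => {c i}, fun i => by rw [hH i]; exact Or.inl rfl, ?_⟩
          ext x
          simp only [Set.mem_iUnion, Set.mem_diff, Set.mem_univ, true_and,
            Set.mem_singleton_iff]
          constructor
          · intro hx
            obtain ⟨i, rfl⟩ := hrange x hx
            exact ⟨i, rfl⟩
          · rintro ⟨i, rfl⟩
            exact hclast i
        · obtain ⟨i, rfl⟩ := hrange v hv
          refine ⟨fun j => if j = i then Set.univ \ {c i} else {c j}, fun j => ?_, ?_⟩
          · rw [hH j]
            by_cases h : j = i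
            · subst h; simp; exact Or.inr rfl
            · simp [h]; exact Or.inl rfl
          · ext x
            simp only [Set.mem_iUnion, Set.mem_diff, Set.mem_univ, true_and,
              Set.mem_singleton_iff]
            constructor
            · intro hx
              exact ⟨i, by simp [hx]⟩
            · rintro ⟨j, hj⟩
              by_cases h : j = i
              · subst h; simpa using hj
              · simp only [h, if_neg, Set.mem_singleton_iff] at hj
                subst hj
                exact fun he => h (hcinj he)
      · have h01 : (⟨0, by omega⟩ : Fin (n - 1)) ≠ ⟨1, by omega⟩ := by
          intro h; exact absurd (congrArg Fin.val h) (by simp)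
        refine ⟨fun j => Set.univ \ {c j}, fun j => by rw [hH j]; exact Or.inr rfl, ?_⟩
        symm
        apply Set.eq_univ_of_forall
        intro x
        simp only [Set.mem_iUnion, Set.mem_diff, Set.mem_univ, true_and,
          Set.mem_singleton_iff]
        by_cases hx : x = c ⟨0, by omega⟩
        · exact ⟨⟨1, by omega⟩, fun h => h01 (hcinj (h.symm ▸ hx ▸ rfl)).symm⟩
        · exact ⟨⟨0, by omega⟩, hx⟩
  -- key cardinality facts
  have hncard_univ : (Set.univ : Set V).ncard = n := by
    rw [Set.ncard_univ, Nat.card_eq_fintype_card, hcard]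
  have hco : ∀ v : V, (Set.univ \ {v} : Set V).ncard = n - 1 := by
    intro v
    rw [Set.ncard_diff_singleton_of_mem (Set.mem_univ v), hncard_univ]
  have hco_ne_univ : ∀ v : V, (Set.univ \ {v} : Set V) ≠ Set.univ := by
    intro v h
    have hmem : v ∈ Set.univ \ ({v} : Set V) := by rw [h]; exact Set.mem_univ v
    exact hmem.2 rfl
  ext s
  simp only [Set.mem_setOf_eq, hUeq, Set.mem_union, Set.mem_singleton_iff]
  constructor
  · rintro ⟨hsU | rfl, hmin⟩
    · obtain ⟨v, rfl⟩ := hsU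
      exact hco v
    · exfalso
      have ht : (Set.univ \ {last} : Set V) = Set.univ :=
        hmin _ (Or.inl ⟨last, rfl⟩) (Set.diff_subset)
      exact hco_ne_univ last ht
  · intro hs
    have hsfin : s.Finite := Set.toFinite s
    have hcompl : sᶜ.ncard = 1 := by
      have := Set.ncard_add_ncard_compl s
      rw [Nat.card_eq_fintype_card, hcard] at this
      omega
    obtain ⟨v, hv⟩ := Set.ncard_eq_one.mp hcompl
    have hsv : s = Set.univ \ {v} := by
      rw [← Set.compl_eq_univ_diff, ← hv, compl_compl]
    subst hsv
    refine ⟨Or.inl ⟨v, rfl⟩, ?_⟩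
    intro t ht hsub
    rcases ht with ⟨v', rfl⟩ | ht
    · by_cases hvv : v' = v
      · rw [hvv]
      · exfalso
        have hmem : v ∈ Set.univ \ ({v'} : Set V) := ⟨trivial, fun h => hvv (h.symm)⟩
        exact (hsub hmem).2 rfl
    · exfalso
      rw [ht] at hsub
      have hmem : v ∈ Set.univ \ ({v} : Set V) := hsub (Set.mem_univ v)
      exact hmem.2 rfl
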